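/- Let H : E → ℝ be smooth and let ζ(t,q,p) = (τ(t,q,p), ξ(t,q,p), η(t,q,p)) be a smooth vector field on E. Then L_ζ α_H = 0 (ζ is a Noether symmetry) if and only if for all (t,q,p) ∈ E and all j = 1,…,n: (u1) Σᵢ pᵢ ∂ξⁱ/∂pⱼ − H ∂τ/∂pⱼ = 0; (u2) ηʲ + Σᵢ pᵢ ∂ξⁱ/∂qⱼ − H ∂τ/∂qⱼ = 0; and (u3) Σᵢ (pᵢ ∂ξⁱ/∂t − ηⁱ ∂H/∂pᵢ − ξⁱ ∂H/∂qᵢ) − H ∂τ/∂t − τ ∂H/∂t = 0. -/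

import Mathlib

noncomputable section
open scoped ContDiff

/-- The extended phase space `E = ℝ × ℝⁿ × ℝⁿ`, with points `x = (t, q, p)`. -/
abbrev EE (n : ℕ) : Type := ℝ × (Fin n → ℝ) × (Fin n → ℝ)

/-- The Poincaré–Cartan 1-form `α_H = p dq − H dt`:
`α_H(x)(τ̂, ξ̂, η̂) = ∑ i, pᵢ ξ̂ᵢ − H(x) τ̂`. -/
def pcForm {n : ℕ} (H : EE n → ℝ) (x : EE n) : EE n →L[ℝ] ℝ :=
  (∑ i, x.2.2 i • ((ContinuousLinearMap.proj i).comp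
      ((ContinuousLinearMap.fst ℝ (Fin n → ℝ) (Fin n → ℝ)).comp
        (ContinuousLinearMap.snd ℝ ℝ ((Fin n → ℝ) × (Fin n → ℝ))))))
    - H x • ContinuousLinearMap.fst ℝ ℝ ((Fin n → ℝ) × (Fin n → ℝ))

/-- The vector field `Z_H(x) = (1, ∂H/∂p(x), −∂H/∂q(x))` of Hamilton's equations. -/
def ZH {n : ℕ} (H : EE n → ℝ) (x : EE n) : EE n :=
  (1, fun i => fderiv ℝ H x (0, 0, Pi.single i 1),
      fun i => - fderiv ℝ H x (0, Pi.single i 1, 0))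

/-- The Lie derivative of a 1-form `α` along a vector field `ζ`:
`(L_ζ α)(x)(v) = (Dα(x)(ζ(x)))(v) + α(x)(Dζ(x)(v))`. -/
def lieDeriv {n : ℕ} (ζ : EE n → EE n) (α : EE n → (EE n →L[ℝ] ℝ)) (x : EE n) :
    EE n →L[ℝ] ℝ :=
  fderiv ℝ α x (ζ x) + (α x).comp (fderiv ℝ ζ x)

/-- The exterior derivative of a 1-form:
`dα(x)(u,v) = (Dα(x)u)(v) − (Dα(x)v)(u)`. -/
def extDerivEE {n : ℕ} (α : EE n → (EE n →L[ℝ] ℝ)) (x u v : EE n) : ℝ :=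
  fderiv ℝ α x u v - fderiv ℝ α x v u

namespace NoetherAux

variable {n : ℕ}

/-- the constant CLM `v ↦ v.2.1 i` -/
def Lq (i : Fin n) : EE n →L[ℝ] ℝ :=
  (ContinuousLinearMap.proj i).comp
      ((ContinuousLinearMap.fst ℝ (Fin n → ℝ) (Fin n → ℝ)).comp
        (ContinuousLinearMap.snd ℝ ℝ ((Fin n → ℝ) × (Fin n → ℝ))))

/-- the constant CLM `v ↦ v.1` -/
def T : EE n →L[ℝ] ℝ := ContinuousLinearMap.fst ℝ ℝ ((Fin n → ℝ) × (Fin n → ℝ))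

/-- the constant CLM `v ↦ v.2.2 i` -/
def Lp (i : Fin n) : EE n →L[ℝ] ℝ :=
  (ContinuousLinearMap.proj i).comp
      ((ContinuousLinearMap.snd ℝ (Fin n → ℝ) (Fin n → ℝ)).comp
        (ContinuousLinearMap.snd ℝ ℝ ((Fin n → ℝ) × (Fin n → ℝ))))

@[simp] lemma Lq_apply (i : Fin n) (v : EE n) : Lq i v = v.2.1 i := rfl
@[simp] lemma T_apply (v : EE n) : T v = v.1 := rfl
@[simp] lemma Lp_apply (i : Fin n) (v : EE n) : Lp i v = v.2.2 i := rfl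

lemma hasFDeriv_pc (H : EE n → ℝ) (hH : Differentiable ℝ H) (x : EE n) :
    HasFDerivAt (pcForm H)
      ((∑ i, (Lp i).smulRight (Lq i)) - (fderiv ℝ H x).smulRight T) x := by
  have h1 : HasFDerivAt (fun y : EE n => ∑ i, y.2.2 i • (Lq i))
      (∑ i, (Lp i).smulRight (Lq i)) x := by
    apply HasFDerivAt.fun_sum
    intro i _
    exact ((Lp i).hasFDerivAt (x := x)).smul_const (Lq i)
  have h2 : HasFDerivAt (fun y : EE n => H y • (T : EE n →L[ℝ] ℝ))
      ((fderiv ℝ H x).smulRight T) x := (hH x).hasFDerivAt.smul_const T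
  exact h1.sub h2

lemma fderiv_pc_apply (H : EE n → ℝ) (hH : Differentiable ℝ H) (x u v : EE n) :
    fderiv ℝ (pcForm H) x u v
      = (∑ i, u.2.2 i * v.2.1 i) - fderiv ℝ H x u * v.1 := by
  rw [(hasFDeriv_pc H hH x).fderiv]
  simp [ContinuousLinearMap.smulRight_apply, smul_eq_mul]

lemma fderiv_comp_clm (L : EE n →L[ℝ] ℝ) (ζ : EE n → EE n)
    (hζ : Differentiable ℝ ζ) (x v : EE n) :
    fderiv ℝ (fun y => L (ζ y)) x v = L (fderiv ℝ ζ x v) := by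
  rw [show (fun y => L (ζ y)) = ⇑L ∘ ζ from rfl,
    (L.hasFDerivAt.comp x (hζ x).hasFDerivAt).fderiv]
  rfl

lemma lie_apply (H : EE n → ℝ) (hH : Differentiable ℝ H)
    (ζ : EE n → EE n) (hζ : Differentiable ℝ ζ) (x v : EE n) :
    lieDeriv ζ (pcForm H) x v
      = (∑ i, (ζ x).2.2 i * v.2.1 i) - fderiv ℝ H x (ζ x) * v.1
        + ((∑ i, x.2.2 i * fderiv ℝ (fun y => (ζ y).2.1 i) x v)
           - H x * fderiv ℝ (fun y => (ζ y).1) x v) := by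
  have e1 : ∀ i, fderiv ℝ (fun y => (ζ y).2.1 i) x v = (fderiv ℝ ζ x v).2.1 i := by
    intro i; exact fderiv_comp_clm (Lq i) ζ hζ x v
  have e2 : fderiv ℝ (fun y => (ζ y).1) x v = (fderiv ℝ ζ x v).1 :=
    fderiv_comp_clm T ζ hζ x v
  simp only [lieDeriv, ContinuousLinearMap.add_apply, ContinuousLinearMap.comp_apply,
    fderiv_pc_apply H hH, e1, e2, pcForm, ContinuousLinearMap.sub_apply,
    ContinuousLinearMap.sum_apply, ContinuousLinearMap.smul_apply, smul_eq_mul]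
  rfl

lemma decomp (v : EE n) :
    v = v.1 • ((1:ℝ), (0:Fin n → ℝ), (0:Fin n → ℝ))
      + ∑ j, v.2.1 j • ((0:ℝ), (Pi.single j 1 : Fin n → ℝ), (0:Fin n → ℝ))
      + ∑ j, v.2.2 j • ((0:ℝ), (0:Fin n → ℝ), (Pi.single j 1 : Fin n → ℝ)) := by
  refine Prod.ext ?_ (Prod.ext ?_ ?_)
  · simp [Prod.fst_sum]
  · funext k
    simp [Prod.fst_sum, Prod.snd_sum, Finset.sum_apply, Pi.single_apply,
      smul_eq_mul, mul_ite, Finset.sum_ite_eq']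
  · funext k
    simp [Prod.fst_sum, Prod.snd_sum, Finset.sum_apply, Pi.single_apply,
      smul_eq_mul, mul_ite, Finset.sum_ite_eq']

lemma clm_apply (L : EE n →L[ℝ] ℝ) (v : EE n) :
    L v = v.1 * L ((1:ℝ), (0:Fin n → ℝ), (0:Fin n → ℝ))
      + ∑ j, v.2.1 j * L ((0:ℝ), (Pi.single j 1 : Fin n → ℝ), (0:Fin n → ℝ))
      + ∑ j, v.2.2 j * L ((0:ℝ), (0:Fin n → ℝ), (Pi.single j 1 : Fin n → ℝ)) := by
  conv_lhs => rw [decomp v]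
  simp only [map_add, map_sum, map_smul, smul_eq_mul]

end NoetherAux

open NoetherAux in
/-- a smooth vector field `ζ = (τ, ξ, η)` is a Noether symmetry
(`L_ζ α_H = 0`) if and only if the coordinate conditions (u1), (u2), (u3) hold at
every point and for every `j`. -/
theorem noether_symmetry_iff_coordinate_conditions {n : ℕ} (hn : 1 ≤ n)
    (H : EE n → ℝ) (hH : ContDiff ℝ ∞ H)
    (ζ : EE n → EE n) (hζ : ContDiff ℝ ∞ ζ) :
    (∀ x, lieDeriv ζ (pcForm H) x = 0) ↔
      (∀ x : EE n, ∀ j : Fin n,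
        -- (u1):  ∑ᵢ pᵢ ∂ξⁱ/∂pⱼ − H ∂τ/∂pⱼ = 0
        ((∑ i, x.2.2 i * fderiv ℝ (fun y => (ζ y).2.1 i) x (0, 0, Pi.single j 1))
          - H x * fderiv ℝ (fun y => (ζ y).1) x (0, 0, Pi.single j 1) = 0) ∧
        -- (u2):  ηʲ + ∑ᵢ pᵢ ∂ξⁱ/∂qⱼ − H ∂τ/∂qⱼ = 0
        ((ζ x).2.2 j + (∑ i, x.2.2 i * fderiv ℝ (fun y => (ζ y).2.1 i) x (0, Pi.single j 1, 0))
          - H x * fderiv ℝ (fun y => (ζ y).1) x (0, Pi.single j 1, 0) = 0) ∧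
        -- (u3):  ∑ᵢ (pᵢ ∂ξⁱ/∂t − ηⁱ ∂H/∂pᵢ − ξⁱ ∂H/∂qᵢ) − H ∂τ/∂t − τ ∂H/∂t = 0
        ((∑ i, (x.2.2 i * fderiv ℝ (fun y => (ζ y).2.1 i) x (1, 0, 0)
            - (ζ x).2.2 i * fderiv ℝ H x (0, 0, Pi.single i 1)
            - (ζ x).2.1 i * fderiv ℝ H x (0, Pi.single i 1, 0)))
          - H x * fderiv ℝ (fun y => (ζ y).1) x (1, 0, 0)
          - (ζ x).1 * fderiv ℝ H x (1, 0, 0) = 0)) := by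
  have hHd : Differentiable ℝ H := hH.differentiable (by simp)
  have hζd : Differentiable ℝ ζ := hζ.differentiable (by simp)
  -- value of the Lie derivative on the p-basis vector
  have bP : ∀ (x : EE n) (j : Fin n),
      lieDeriv ζ (pcForm H) x ((0:ℝ), (0:Fin n → ℝ), (Pi.single j 1 : Fin n → ℝ))
        = (∑ i, x.2.2 i * fderiv ℝ (fun y => (ζ y).2.1 i) x (0, 0, Pi.single j 1))
          - H x * fderiv ℝ (fun y => (ζ y).1) x (0, 0, Pi.single j 1) := by
    intro x j
    rw [lie_apply H hHd ζ hζd]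
    simp
  -- value on the q-basis vector
  have bQ : ∀ (x : EE n) (j : Fin n),
      lieDeriv ζ (pcForm H) x ((0:ℝ), (Pi.single j 1 : Fin n → ℝ), (0:Fin n → ℝ))
        = (ζ x).2.2 j + (∑ i, x.2.2 i * fderiv ℝ (fun y => (ζ y).2.1 i) x (0, Pi.single j 1, 0))
          - H x * fderiv ℝ (fun y => (ζ y).1) x (0, Pi.single j 1, 0) := by
    intro x j
    rw [lie_apply H hHd ζ hζd]
    simp [Pi.single_apply, mul_ite, Finset.sum_ite_eq']
    ring
  -- value on the t-basis vector
  have bT : ∀ x : EE n,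
      lieDeriv ζ (pcForm H) x ((1:ℝ), (0:Fin n → ℝ), (0:Fin n → ℝ))
        = (∑ i, (x.2.2 i * fderiv ℝ (fun y => (ζ y).2.1 i) x (1, 0, 0)
            - (ζ x).2.2 i * fderiv ℝ H x (0, 0, Pi.single i 1)
            - (ζ x).2.1 i * fderiv ℝ H x (0, Pi.single i 1, 0)))
          - H x * fderiv ℝ (fun y => (ζ y).1) x (1, 0, 0)
          - (ζ x).1 * fderiv ℝ H x (1, 0, 0) := by
    intro x
    rw [lie_apply H hHd ζ hζd]
    rw [clm_apply (fderiv ℝ H x) (ζ x)]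
    simp only [Finset.sum_sub_distrib]
    simp
    ring
  constructor
  · intro h x j
    refine ⟨?_, ?_, ?_⟩
    · rw [← bP x j, h x]; rfl
    · rw [← bQ x j, h x]; rfl
    · rw [← bT x, h x]; rfl
  · intro h x
    apply ContinuousLinearMap.ext
    intro v
    rw [clm_apply (lieDeriv ζ (pcForm H) x) v, bT x]
    have j0 : Fin n := ⟨0, hn⟩
    rw [(h x j0).2.2]
    simp only [mul_zero, zero_add]
    have hq : ∀ j ∈ Finset.univ, v.2.1 j *
        lieDeriv ζ (pcForm H) x ((0:ℝ), (Pi.single j 1 : Fin n → ℝ), (0:Fin n → ℝ)) = 0 := by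
      intro j _
      rw [bQ x j, (h x j).2.1, mul_zero]
    have hp : ∀ j ∈ Finset.univ, v.2.2 j *
        lieDeriv ζ (pcForm H) x ((0:ℝ), (0:Fin n → ℝ), (Pi.single j 1 : Fin n → ℝ)) = 0 := by
      intro j _
      rw [bP x j, (h x j).1, mul_zero]
    rw [Finset.sum_congr rfl hq, Finset.sum_congr rfl hp]
    simp
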